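/- For every natural number k > 1, every element of the presented group ⟨x, y | x⁻¹yx = y², xᵏ = 1⟩ can be written as x^m · y^n for some natural numbers m, n with 0 ≤ m < k and 0 ≤ n < 2^k − 1, where x and y denote the images of the generators. -/

import Mathlib

/-- The relator set of the presentation `⟨x, y | x⁻¹yx = y², xᵏ = 1⟩`, with `x` the
generator indexed by `true` and `y` the generator indexed by `false`. -/
def bsRels (k : ℕ) : Set (FreeGroup Bool) :=
  { (FreeGroup.of true)⁻¹ * FreeGroup.of false * FreeGroup.of true *
      (FreeGroup.of false ^ 2)⁻¹,
    FreeGroup.of true ^ k }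

private lemma bs_rel_one {k : ℕ} {r : FreeGroup Bool} (hr : r ∈ bsRels k) :
    PresentedGroup.mk (bsRels k) r = 1 :=
  (QuotientGroup.eq_one_iff r).mpr (Subgroup.subset_normalClosure hr)

private lemma bs_xk {k : ℕ} :
    (PresentedGroup.of (rels := bsRels k) true) ^ k = 1 := by
  have := bs_rel_one (k := k) (r := FreeGroup.of true ^ k) (Or.inr rfl)
  simpa [PresentedGroup.of] using this

private lemma bs_conj {k : ℕ} :
    (PresentedGroup.of (rels := bsRels k) true)⁻¹ *
      PresentedGroup.of (rels := bsRels k) false *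
      PresentedGroup.of (rels := bsRels k) true =
    (PresentedGroup.of (rels := bsRels k) false) ^ 2 := by
  have := bs_rel_one (k := k)
    (r := (FreeGroup.of true)⁻¹ * FreeGroup.of false * FreeGroup.of true *
      (FreeGroup.of false ^ 2)⁻¹) (Or.inl rfl)
  simp only [map_mul, map_inv, map_pow] at this
  rw [mul_inv_eq_one] at this
  simpa [PresentedGroup.of] using this

private lemma bs_push {k : ℕ} (c : ℕ) (b : ℤ) :
    (PresentedGroup.of (rels := bsRels k) false) ^ b *
      (PresentedGroup.of (rels := bsRels k) true) ^ c =
    (PresentedGroup.of (rels := bsRels k) true) ^ c *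
      (PresentedGroup.of (rels := bsRels k) false) ^ ((2 ^ c : ℕ) * b) := by
  set X := PresentedGroup.of (rels := bsRels k) true
  set Y := PresentedGroup.of (rels := bsRels k) false
  induction c generalizing b with
  | zero => simp
  | succ n ih =>
    have hb : Y ^ b * X = X * Y ^ (2 * b) := by
      have h1 : X⁻¹ * Y ^ b * X = (Y ^ 2) ^ b := by
        rw [← bs_conj (k := k)]
        have := conj_zpow (i := b) (a := X⁻¹) (b := Y)
        simpa using this.symm
      have h2 : X * (X⁻¹ * Y ^ b * X) = X * (Y ^ 2) ^ b := by rw [h1]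
      calc Y ^ b * X = X * (X⁻¹ * Y ^ b * X) := by group
        _ = X * (Y ^ 2) ^ b := h2
        _ = X * Y ^ (2 * b) := by rw [← zpow_natCast (Y) 2, ← zpow_mul]; norm_num
    calc Y ^ b * X ^ (n + 1) = (Y ^ b * X) * X ^ n := by rw [pow_succ']; group
      _ = X * (Y ^ (2 * b) * X ^ n) := by rw [hb]; group
      _ = X * (X ^ n * Y ^ ((2 ^ n : ℕ) * (2 * b))) := by rw [ih]
      _ = X ^ (n + 1) * Y ^ ((2 ^ (n + 1) : ℕ) * b) := by
          rw [pow_succ']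
          rw [mul_assoc]
          congr 1
          push_cast
          ring_nf

private lemma bs_yord {k : ℕ} :
    (PresentedGroup.of (rels := bsRels k) false) ^ (2 ^ k - 1 : ℕ) = 1 := by
  set X := PresentedGroup.of (rels := bsRels k) true
  set Y := PresentedGroup.of (rels := bsRels k) false
  have h := bs_push (k := k) k 1
  rw [bs_xk (k := k)] at h
  simp only [mul_one, one_mul] at h
  have h2 : Y ^ ((2 ^ k : ℕ) : ℤ) * Y ^ (-1 : ℤ) = 1 := by
    rw [← h]; simp; exact mul_inv_cancel _
  rw [← zpow_add] at h2
  have : ((2 ^ k : ℕ) : ℤ) + (-1) = ((2 ^ k - 1 : ℕ) : ℤ) := by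
    have : (1 : ℕ) ≤ 2 ^ k := Nat.one_le_two_pow
    omega
  rw [this, zpow_natCast] at h2
  exact h2

theorem stmt_5 (k : ℕ) (hk : 1 < k) (g : PresentedGroup (bsRels k)) :
    ∃ m n : ℕ, m < k ∧ n < 2 ^ k - 1 ∧
      g = (PresentedGroup.of (rels := bsRels k) true) ^ m *
          (PresentedGroup.of (rels := bsRels k) false) ^ n := by
  set X := PresentedGroup.of (rels := bsRels k) true with hX
  set Y := PresentedGroup.of (rels := bsRels k) false with hY
  have hk0 : 0 < k := by omega
  have hN : 0 < 2 ^ k - 1 := by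
    have : 2 ^ 1 < 2 ^ k := Nat.pow_lt_pow_right one_lt_two hk
    omega
  -- step 1: g = X ^ a * Y ^ b for a : ℕ, b : ℤ
  have key : ∃ (a : ℕ) (b : ℤ), g = X ^ a * Y ^ b := by
    induction g with
    | H z =>
      induction z using FreeGroup.induction_on with
      | C1 => exact ⟨0, 0, by simp⟩
      | of t =>
        cases t
        · exact ⟨0, 1, by simp [hY]; rfl⟩
        · exact ⟨1, 0, by simp [hX]; rfl⟩
      | inv_of t _ =>
        cases t
        · exact ⟨0, -1, by simp [hY]; rfl⟩
        · refine ⟨k - 1, 0, ?_⟩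
          have : X ^ k = 1 := bs_xk (k := k)
          have hxx : ((PresentedGroup.mk (bsRels k)) (FreeGroup.of true) : PresentedGroup (bsRels k)) = X := rfl
          rw [map_inv, hxx]
          have h1 : X ^ (k - 1) * X = 1 := by
            rw [← pow_succ, show k - 1 + 1 = k from by omega]
            exact bs_xk (k := k)
          simp [eq_inv_of_mul_eq_one_left h1]
      | mul u v hu hv =>
        obtain ⟨a, b, hab⟩ := hu
        obtain ⟨c, d, hcd⟩ := hv
        refine ⟨a + c, (2 ^ c : ℕ) * b + d, ?_⟩
        rw [map_mul, hab, hcd]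
        calc X ^ a * Y ^ b * (X ^ c * Y ^ d)
            = X ^ a * (Y ^ b * X ^ c) * Y ^ d := by group
          _ = X ^ a * (X ^ c * Y ^ ((2 ^ c : ℕ) * b)) * Y ^ d := by
              rw [bs_push (k := k) c b]
          _ = X ^ (a + c) * Y ^ ((2 ^ c : ℕ) * b + d) := by
              rw [pow_add, zpow_add]; group
  obtain ⟨a, b, hab⟩ := key
  -- reduce a mod k and b mod (2^k - 1)
  refine ⟨a % k, (b % ((2 ^ k - 1 : ℕ) : ℤ)).toNat, Nat.mod_lt _ hk0, ?_, ?_⟩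
  · have hNZ : (0 : ℤ) < ((2 ^ k - 1 : ℕ) : ℤ) := by exact_mod_cast hN
    have := Int.emod_lt_of_pos b hNZ
    omega
  · rw [hab]
    congr 1
    · -- X ^ a = X ^ (a % k)
      conv_lhs => rw [← Nat.div_add_mod a k]
      rw [pow_add, pow_mul, bs_xk (k := k), one_pow, one_mul]
    · -- Y ^ b = Y ^ toNat ...
      have hNZ : (0 : ℤ) < ((2 ^ k - 1 : ℤ)) := by
        have : (2:ℤ) ^ 1 < 2 ^ k := by
          apply pow_lt_pow_right₀ one_lt_two hk
        omega
      have hy1 : Y ^ ((2 ^ k - 1 : ℕ) : ℤ) = 1 := by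
        rw [zpow_natCast]; exact bs_yord (k := k)
      have hcast : ((2 ^ k - 1 : ℕ) : ℤ) = 2 ^ k - 1 := by
        push_cast [Nat.one_le_two_pow]
        omega
      have hmod : b = (2 ^ k - 1 : ℤ) * (b / (2 ^ k - 1)) + b % (2 ^ k - 1) := by
        rw [Int.mul_ediv_add_emod]
      calc Y ^ b = Y ^ ((2 ^ k - 1 : ℤ) * (b / (2 ^ k - 1)) + b % (2 ^ k - 1)) := by
            rw [← hmod]
        _ = (Y ^ ((2 ^ k - 1 : ℤ))) ^ (b / (2 ^ k - 1)) * Y ^ (b % (2 ^ k - 1)) := by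
            rw [zpow_add, zpow_mul]
        _ = Y ^ (b % (2 ^ k - 1)) := by
            rw [← hcast, hy1, one_zpow, one_mul]
        _ = Y ^ ((b % ((2 ^ k - 1 : ℕ) : ℤ)).toNat) := by
            rw [← zpow_natCast]
            congr 1
            rw [hcast]
            exact (Int.toNat_of_nonneg (Int.emod_nonneg b (by omega))).symm
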